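/- Let Λ be the coweight lattice of a split reductive group G with positive-coroot cone Λ^{pos,Q}_G in Λ⊗Q, and let Λ̌^+_G be the dominant weights. For a subset S of Λ⊗Q, the following are equivalent: (i) for every dominant weight λ̌ ∈ Λ̌^+_G, the set of values ⟨λ̌, s⟩ for s ∈ S is bounded below in Q; (ii) there exists a subset S₀ of Λ⊗Q with compact closure in Λ⊗R such that S ⊆ S₀ + Λ^{pos,Q}_G. -/

import Mathlib

/-!
STATEMENT 0: Combinatorial characterization of subsets of Λ⊗ℚ bounded below
with respect to the rational dominance order (Proposition on bounded-below sets,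
§sss:bddbelow of the paper).

We model the coweight lattice Λ as `ι → ℤ` (so Λ⊗ℚ is `ι → ℚ` and Λ⊗ℝ is `ι → ℝ`),
the positive coroots of the split reductive group `G` as an arbitrary finite set
`Φ` of vectors in Λ⊗ℚ, the rational cone `Λ^{pos,ℚ}_G` as the set of non-negative
rational combinations of elements of `Φ`, and the (integral) dominant weights
`Λ̌^+_G` as the lattice vectors pairing non-negatively with every positive coroot.
-/

open scoped BigOperators

noncomputable section

variable {ι : Type*} [Fintype ι]

/-- The natural pairing between weights and coweights (in dual coordinates). -/
def pairQ (x y : ι → ℚ) : ℚ := ∑ i, x i * y i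

/-- The rational cone `Λ^{pos,ℚ}_G` spanned by the finite set `Φ` of positive coroots. -/
def ratCone (Φ : Finset (ι → ℚ)) : Set (ι → ℚ) :=
  {μ | ∃ c : (ι → ℚ) → ℚ, (∀ x, 0 ≤ c x) ∧ μ = ∑ x ∈ Φ, c x • x}

/-- Coordinatewise embedding of `Λ⊗ℚ` into `Λ⊗ℝ`. -/
def castR (v : ι → ℚ) : ι → ℝ := fun i => (v i : ℝ)

set_option linter.unusedSectionVars false

namespace Stmt0Aux

lemma pairQ_comm (x y : ι → ℚ) : pairQ x y = pairQ y x := by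
  unfold pairQ; exact Finset.sum_congr rfl fun i _ => mul_comm _ _

lemma pairQ_zero_left (y : ι → ℚ) : pairQ (0 : ι → ℚ) y = 0 := by
  unfold pairQ; simp

lemma pairQ_smul_left (c : ℚ) (x y : ι → ℚ) : pairQ (c • x) y = c * pairQ x y := by
  unfold pairQ; rw [Finset.mul_sum]
  exact Finset.sum_congr rfl fun i _ => by simp [mul_assoc]

lemma pairQ_add_left (x x' y : ι → ℚ) : pairQ (x + x') y = pairQ x y + pairQ x' y := by
  unfold pairQ; rw [← Finset.sum_add_distrib]
  exact Finset.sum_congr rfl fun i _ => by simp [add_mul]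

lemma pairQ_sub_left (x x' y : ι → ℚ) : pairQ (x - x') y = pairQ x y - pairQ x' y := by
  unfold pairQ; rw [← Finset.sum_sub_distrib]
  exact Finset.sum_congr rfl fun i _ => by simp [sub_mul]

lemma pairQ_add_right (x y y' : ι → ℚ) : pairQ x (y + y') = pairQ x y + pairQ x y' := by
  rw [pairQ_comm, pairQ_add_left, pairQ_comm y x, pairQ_comm y' x]

lemma pairQ_smul_right (c : ℚ) (x y : ι → ℚ) : pairQ x (c • y) = c * pairQ x y := by
  rw [pairQ_comm, pairQ_smul_left, pairQ_comm]

lemma pairQ_sum_right {κ : Type*} (t : Finset κ) (x : ι → ℚ) (f : κ → ι → ℚ) :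
    pairQ x (∑ k ∈ t, f k) = ∑ k ∈ t, pairQ x (f k) := by
  classical
  induction t using Finset.induction with
  | empty => rw [Finset.sum_empty, pairQ_comm, pairQ_zero_left, Finset.sum_empty]
  | insert _ _ h ih => rw [Finset.sum_insert h, Finset.sum_insert h, pairQ_add_right, ih]

/-- cone generated by a finite family -/
def coneOf {n : ℕ} (v : Fin n → ι → ℚ) : Set (ι → ℚ) :=
  {x | ∃ c : Fin n → ℚ, (∀ i, 0 ≤ c i) ∧ x = ∑ i, c i • v i}

/-- dual (solution set of inequalities) of a finite family -/
def dualF {κ : Type*} [Fintype κ] (w : κ → ι → ℚ) : Set (ι → ℚ) :=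
  {x | ∀ j, 0 ≤ pairQ (w j) x}

lemma dualF_reindex {κ : Type*} [Fintype κ] (w : κ → ι → ℚ) :
    ∃ (m : ℕ) (u : Fin m → ι → ℚ), dualF u = dualF w := by
  refine ⟨Fintype.card κ, w ∘ (Fintype.equivFin κ).symm, ?_⟩
  ext x
  constructor
  · intro h j
    have := h (Fintype.equivFin κ j)
    simpa using this
  · intro h j; exact h _

lemma mem_coneOf_gen {n : ℕ} (v : Fin n → ι → ℚ) (i : Fin n) : v i ∈ coneOf v := by
  classical
  refine ⟨fun k => if k = i then 1 else 0, fun k => by positivity, ?_⟩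
  rw [Finset.sum_eq_single i]
  · simp
  · intro k _ hk; simp [hk]
  · simp

lemma coneOf_sum {n : ℕ} {v : Fin n → ι → ℚ} {κ : Type*} [Fintype κ] (t : Finset κ)
    (c : κ → ℚ) (x : κ → ι → ℚ) (hc : ∀ k, 0 ≤ c k) (hx : ∀ k ∈ t, x k ∈ coneOf v) :
    (∑ k ∈ t, c k • x k) ∈ coneOf v := by
  classical
  induction t using Finset.induction with
  | empty =>
    refine ⟨fun _ => 0, fun _ => le_refl _, by simp⟩
  | @insert a s ha ih =>
    obtain ⟨d, hd, hds⟩ := ih (fun k hk => hx k (Finset.mem_insert_of_mem hk))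
    obtain ⟨e, he, hes⟩ := hx a (Finset.mem_insert_self a s)
    refine ⟨fun i => c a * e i + d i, fun i => add_nonneg (mul_nonneg (hc a) (he i)) (hd i), ?_⟩
    rw [Finset.sum_insert ha, hds, hes]
    rw [Finset.smul_sum, ← Finset.sum_add_distrib]
    exact Finset.sum_congr rfl fun i _ => by rw [add_smul, smul_smul, mul_smul]

end Stmt0Aux

-- FM step: appended to a.lean content for testing
section FM
open Stmt0Aux

lemma fourier_motzkin {m : ℕ} (w : Fin m → ι → ℚ) (v : ι → ℚ) :
    ∃ (M : ℕ) (u : Fin M → ι → ℚ),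
      dualF u = {x | ∃ t : ℚ, 0 ≤ t ∧ ∀ j, t * pairQ (w j) v ≤ pairQ (w j) x} := by
  classical
  set p : Fin m → ℚ := fun j => pairQ (w j) v with hp
  set W : (Fin m ⊕ Fin m × Fin m) → ι → ℚ := fun z =>
    match z with
    | Sum.inl j => if p j < 0 then 0 else w j
    | Sum.inr (j, k) => if 0 < p j ∧ p k < 0 then p j • w k - p k • w j else 0
    with hW
  obtain ⟨M, u, hu⟩ := dualF_reindex W
  refine ⟨M, u, ?_⟩
  rw [hu]
  ext x
  constructor
  · intro hx
    -- from inequalities to existence of t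
    set q : Fin m → ℚ := fun j => pairQ (w j) x with hq
    have hrow1 : ∀ j, ¬ (p j < 0) → 0 ≤ q j := by
      intro j hj
      have := hx (Sum.inl j)
      simpa [hW, hj, hq] using this
    have hrow2 : ∀ j k, 0 < p j → p k < 0 → p j * q k - p k * q j ≥ 0 := by
      intro j k hj hk
      have := hx (Sum.inr (j, k))
      rw [hW] at this
      simp only [hj, hk, and_self, if_true] at this
      rw [pairQ_sub_left, pairQ_smul_left, pairQ_smul_left] at this
      linarith [this]
    by_cases hpos : ∃ j, 0 < p j
    · -- t := min over positive rows of q j / p j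
      set P : Finset (Fin m) := Finset.univ.filter (fun j => 0 < p j) with hP
      have hPne : P.Nonempty := by
        obtain ⟨j, hj⟩ := hpos
        exact ⟨j, by simp [hP, hj]⟩
      obtain ⟨k₀, hk₀P, hk₀min⟩ := Finset.exists_min_image P (fun j => q j / p j) hPne
      have hpk₀ : 0 < p k₀ := by simpa [hP] using hk₀P
      set t : ℚ := q k₀ / p k₀ with ht
      have ht0 : 0 ≤ t := div_nonneg (hrow1 k₀ (not_lt.mpr hpk₀.le)) hpk₀.le
      refine ⟨t, ht0, fun j => ?_⟩
      rcases lt_trichotomy (p j) 0 with hj | hj | hj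
      · -- negative row: use pair (k₀, j)
        have h2 := hrow2 k₀ j hpk₀ hj
        have : p j * q k₀ / p k₀ ≤ q j := by
          rw [div_le_iff₀ hpk₀]
          nlinarith
        calc t * p j = p j * q k₀ / p k₀ := by rw [ht]; ring
          _ ≤ q j := this
      · show t * p j ≤ q j
        rw [hj, mul_zero]
        exact hrow1 j (by rw [hj]; exact lt_irrefl 0)
      · have hjP : j ∈ P := by simp [hP, hj]
        have := hk₀min j hjP
        rw [ht]
        rw [div_le_div_iff₀ hpk₀ hj] at this
        calc q k₀ / p k₀ * p j = q k₀ * p j / p k₀ := by ring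
          _ ≤ q j := by rw [div_le_iff₀ hpk₀]; nlinarith
    · -- all p j ≤ 0 : take t large
      push_neg at hpos
      set t : ℚ := ∑ j, max 0 (q j / p j) with ht
      have htj : ∀ j, max 0 (q j / p j) ≤ t := by
        intro j
        exact Finset.single_le_sum (fun k _ => le_max_left 0 (q k / p k)) (Finset.mem_univ j)
      have ht0 : 0 ≤ t := Finset.sum_nonneg fun k _ => le_max_left 0 (q k / p k)
      refine ⟨t, ht0, fun j => ?_⟩
      rcases eq_or_lt_of_le (hpos j) with hj | hj
      · show t * p j ≤ q j
        rw [hj, mul_zero]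
        exact hrow1 j (by rw [hj]; exact lt_irrefl 0)
      · have h1 : q j / p j ≤ t := le_trans (le_max_right _ _) (htj j)
        calc t * p j ≤ (q j / p j) * p j := by
              exact mul_le_mul_of_nonpos_right h1 hj.le
          _ = q j := div_mul_cancel₀ (q j) (ne_of_lt hj)
  · rintro ⟨t, ht0, htj⟩ z
    match z with
    | Sum.inl j =>
      by_cases hj : p j < 0
      · simp [hW, hj, pairQ_zero_left]
      · have : 0 ≤ p j := not_lt.mp hj
        have := htj j
        simp only [hW, if_neg hj]
        nlinarith
    | Sum.inr (j, k) =>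
      by_cases hjk : 0 < p j ∧ p k < 0
      · simp only [hW, if_pos hjk]
        rw [pairQ_sub_left, pairQ_smul_left, pairQ_smul_left]
        obtain ⟨hj, hk⟩ := hjk
        have h1 := htj j
        have h2 := htj k
        nlinarith
      · simp [hW, hjk, pairQ_zero_left]
end FM

section Weyl
open Stmt0Aux

lemma coneOf_succ {n : ℕ} (v : Fin (n+1) → ι → ℚ) (x : ι → ℚ) :
    x ∈ coneOf v ↔ ∃ t : ℚ, 0 ≤ t ∧
      x - t • v (Fin.last n) ∈ coneOf (fun j : Fin n => v j.castSucc) := by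
  constructor
  · rintro ⟨c, hc, rfl⟩
    refine ⟨c (Fin.last n), hc _, fun j => c j.castSucc, fun j => hc _, ?_⟩
    rw [Fin.sum_univ_castSucc]
    abel
  · rintro ⟨t, ht, c, hc, hxc⟩
    rw [sub_eq_iff_eq_add] at hxc
    refine ⟨Fin.snoc c t, ?_, ?_⟩
    · intro i
      refine Fin.lastCases ?_ ?_ i
      · simpa using ht
      · intro j; simpa using hc j
    · rw [Fin.sum_univ_castSucc]
      simpa using hxc

lemma weyl : ∀ (n : ℕ) (v : Fin n → ι → ℚ), ∃ (m : ℕ) (w : Fin m → ι → ℚ),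
    coneOf v = dualF w := by
  intro n
  induction n with
  | zero =>
    intro v
    classical
    set e : ι → ι → ℚ := fun i k => if k = i then 1 else 0 with he
    have hpair : ∀ (i : ι) (x : ι → ℚ), pairQ (e i) x = x i := by
      intro i x
      unfold pairQ
      rw [Finset.sum_eq_single i]
      · simp [he]
      · intro k _ hk; simp [he, hk]
      · simp
    have hneg : ∀ (i : ι) (x : ι → ℚ), pairQ (-(e i)) x = -(x i) := by
      intro i x
      have h : -(e i) = (-1 : ℚ) • e i := by funext k; simp
      rw [h, pairQ_smul_left, hpair]; ring
    set B : (ι ⊕ ι) → ι → ℚ := Sum.elim e (fun i => -(e i)) with hB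
    obtain ⟨m, u, hu⟩ := dualF_reindex B
    refine ⟨m, u, ?_⟩
    rw [hu]
    ext x
    constructor
    · rintro ⟨c, _, rfl⟩ z
      rcases z with i | i
      · rw [show B (Sum.inl i) = e i from rfl, hpair]
        simp
      · rw [show B (Sum.inr i) = -(e i) from rfl, hneg]
        simp
    · intro hx
      refine ⟨fun _ => 0, fun _ => le_refl _, ?_⟩
      funext i
      have h1 := hx (Sum.inl i)
      rw [show B (Sum.inl i) = e i from rfl, hpair] at h1
      have h2 := hx (Sum.inr i)
      rw [show B (Sum.inr i) = -(e i) from rfl, hneg] at h2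
      simp only [Finset.univ_eq_empty, Finset.sum_empty]
      have hx0 : x i = 0 := le_antisymm (by linarith) h1
      simpa using hx0
  | succ n ih =>
    intro v
    obtain ⟨m, w, hw⟩ := ih (fun j => v j.castSucc)
    obtain ⟨M, u, hu⟩ := fourier_motzkin w (v (Fin.last n))
    refine ⟨M, u, ?_⟩
    rw [hu]
    ext x
    rw [Set.mem_setOf_eq, coneOf_succ, hw]
    constructor
    · rintro ⟨t, ht, hm⟩
      refine ⟨t, ht, fun j => ?_⟩
      have := hm j
      rw [pairQ_comm, pairQ_sub_left, pairQ_comm x, pairQ_comm (t • v (Fin.last n)),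
        pairQ_smul_right] at this
      linarith
    · rintro ⟨t, ht, hm⟩
      refine ⟨t, ht, fun j => ?_⟩
      have := hm j
      rw [pairQ_comm, pairQ_sub_left, pairQ_comm x, pairQ_comm (t • v (Fin.last n)),
        pairQ_smul_right]
      linarith

lemma coneOf_subset_dualF {n m : ℕ} (A : Fin n → ι → ℚ) (B : Fin m → ι → ℚ)
    (h : ∀ i j, 0 ≤ pairQ (A i) (B j)) : coneOf B ⊆ dualF A := by
  rintro x ⟨c, hc, rfl⟩ i
  rw [pairQ_sum_right]
  exact Finset.sum_nonneg fun j _ => by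
    rw [pairQ_smul_right]; exact mul_nonneg (hc j) (h i j)

lemma minkowski {n : ℕ} (a : Fin n → ι → ℚ) :
    ∃ (m : ℕ) (b : Fin m → ι → ℚ), dualF a = coneOf b ∧ dualF b = coneOf a := by
  obtain ⟨m, b, hb⟩ := weyl n a
  refine ⟨m, b, ?_, hb.symm⟩
  apply Set.Subset.antisymm
  · obtain ⟨M, E, hE⟩ := weyl m b
    intro lam hlam
    rw [hE]
    intro k
    have hEk : E k ∈ coneOf a := by
      rw [hb]
      intro j
      have hbj := mem_coneOf_gen b j
      rw [hE] at hbj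
      have := hbj k
      rwa [pairQ_comm]
    obtain ⟨c, hc, hck⟩ := hEk
    rw [hck, pairQ_comm, pairQ_sum_right]
    exact Finset.sum_nonneg fun i _ => by
      rw [pairQ_smul_right, pairQ_comm]
      exact mul_nonneg (hc i) (hlam i)
  · apply coneOf_subset_dualF
    intro i j
    have := mem_coneOf_gen a i
    rw [hb] at this
    have := this j
    rwa [pairQ_comm]
end Weyl

section Bridge
open Stmt0Aux

lemma ratCone_eq_coneOf (Φ : Finset (ι → ℚ)) :
    ratCone Φ = coneOf (fun k : Fin Φ.card => (Φ.equivFin.symm k : ι → ℚ)) := by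
  classical
  ext μ
  constructor
  · rintro ⟨c, hc, rfl⟩
    refine ⟨fun k => c (Φ.equivFin.symm k : ι → ℚ), fun k => hc _, ?_⟩
    rw [← Finset.sum_coe_sort Φ (fun x => c x • x)]
    exact (Equiv.sum_comp Φ.equivFin.symm
      (fun y : {x // x ∈ Φ} => c (y : ι → ℚ) • (y : ι → ℚ))).symm
  · rintro ⟨c, hc, rfl⟩
    refine ⟨fun x => if h : x ∈ Φ then c (Φ.equivFin ⟨x, h⟩) else 0,
      fun x => by dsimp; split
                  · exact hc _
                  · exact le_refl 0, ?_⟩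
    rw [← Finset.sum_coe_sort Φ
      (fun x => (if h : x ∈ Φ then c (Φ.equivFin ⟨x, h⟩) else 0) • x)]
    rw [← Equiv.sum_comp Φ.equivFin
      (fun k => c k • (Φ.equivFin.symm k : ι → ℚ))]
    refine Finset.sum_congr rfl fun y _ => ?_
    rw [dif_pos y.2, Equiv.symm_apply_apply]

def aug (x : ι → ℚ) (t : ℚ) : Option ι → ℚ := fun o => Option.elim o t x

@[simp] lemma aug_none (x : ι → ℚ) (t : ℚ) : aug x t none = t := rfl
@[simp] lemma aug_some (x : ι → ℚ) (t : ℚ) (i : ι) : aug x t (some i) = x i := rfl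

lemma pairQ_aug (x : ι → ℚ) (t : ℚ) (z : Option ι → ℚ) :
    pairQ (aug x t) z = t * z none + pairQ x (fun i => z (some i)) := by
  unfold pairQ
  rw [Fintype.sum_option]
  rfl
end Bridge

open Stmt0Aux

/-- A subset `S ⊆ Λ⊗ℚ` is bounded below in the sense (i) — the values of every
(integral) dominant weight on `S` are bounded below — if and only if (ii) there is a
subset `S₀ ⊆ Λ⊗ℚ` with compact closure in `Λ⊗ℝ` such that `S ⊆ S₀ + Λ^{pos,ℚ}_G`. -/
theorem stmt0 (Φ : Finset (ι → ℚ)) (S : Set (ι → ℚ)) :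
    (∀ lamCheck : ι → ℤ, (∀ α ∈ Φ, 0 ≤ pairQ (fun i => (lamCheck i : ℚ)) α) →
      BddBelow ((fun s => pairQ (fun i => (lamCheck i : ℚ)) s) '' S)) ↔
    (∃ S₀ : Set (ι → ℚ), IsCompact (closure (castR '' S₀)) ∧
      ∀ s ∈ S, ∃ s₀ ∈ S₀, s - s₀ ∈ ratCone Φ) := by
  classical
  constructor
  · -- (i) → (ii)
    intro hbdd
    set n := Φ.card with hn
    set a : Fin n → ι → ℚ := fun k => (Φ.equivFin.symm k : ι → ℚ) with ha
    have hrc : ratCone Φ = coneOf a := ratCone_eq_coneOf Φ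
    obtain ⟨m, b, hdual, hdualb⟩ := minkowski a
    -- clear denominators
    set N : Fin m → ℚ := fun j => ∏ i, ((b j i).den : ℚ) with hN
    have hNpos : ∀ j, 0 < N j := fun j => Finset.prod_pos fun i _ => by positivity
    set b' : Fin m → ι → ℚ := fun j => N j • b j with hb'
    set lam : Fin m → ι → ℤ :=
      fun j i => (∏ i' ∈ Finset.univ.erase i, ((b j i').den : ℤ)) * (b j i).num with hlam
    have hcast : ∀ j, (fun i => ((lam j i : ℚ))) = b' j := by
      intro j; funext i
      show ((lam j i : ℚ)) = N j * b j i
      have hden0 : ((b j i).den : ℚ) ≠ 0 := by exact_mod_cast (b j i).den_ne_zero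
      have h1 := Rat.num_div_den (b j i)
      rw [div_eq_iff hden0] at h1
      have hden : ((b j i).den : ℚ) * b j i = ((b j i).num : ℚ) := by
        rw [h1]; ring
      have hsplit : N j = ((b j i).den : ℚ) * ∏ i' ∈ Finset.univ.erase i, ((b j i').den : ℚ) := by
        show (∏ i' : ι, ((b j i').den : ℚ)) = _
        exact (Finset.mul_prod_erase Finset.univ _ (Finset.mem_univ i)).symm
      rw [hsplit, hlam]
      push_cast
      rw [mul_assoc, ← hden]
      ring
    -- each b' j is "dominant"
    have hbdom : ∀ j, ∀ α ∈ Φ, 0 ≤ pairQ (b' j) α := by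
      intro j α hα
      have hbj : b j ∈ dualF a := by
        rw [hdual]; exact mem_coneOf_gen b j
      have hαa : α = a (Φ.equivFin ⟨α, hα⟩) := by
        rw [ha]; simp
      rw [hb']
      show 0 ≤ pairQ (N j • b j) α
      rw [pairQ_smul_left]
      refine mul_nonneg (hNpos j).le ?_
      rw [hαa, pairQ_comm]
      exact hbj _
    -- lower bounds
    have hβ : ∀ j, ∃ βj : ℚ, ∀ s ∈ S, βj ≤ pairQ (b' j) s := by
      intro j
      obtain ⟨βj, hβj⟩ := hbdd (lam j) (by rw [show (fun i => ((lam j i : ℚ))) = b' j from hcast j]; exact hbdom j)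
      refine ⟨βj, fun s hs => ?_⟩
      have := hβj ⟨s, hs, rfl⟩
      rwa [hcast j] at this
    choose β hβS using hβ
    -- homogenized rows
    set rows : Fin (m + 1) → Option ι → ℚ :=
      Fin.snoc (fun j => aug (b' j) (-(β j))) (aug 0 1) with hrows
    obtain ⟨r, g, hg, _⟩ := minkowski rows
    set gt : Fin r → ℚ := fun k => g k none with hgt
    set gx : Fin r → ι → ℚ := fun k => fun i => g k (some i) with hgx
    have hgC : ∀ k, g k ∈ dualF rows := by
      intro k; rw [hg]; exact mem_coneOf_gen g k
    have hgt0 : ∀ k, 0 ≤ gt k := by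
      intro k
      have := hgC k (Fin.last m)
      rw [hrows] at this
      rw [Fin.snoc_last] at this
      rw [pairQ_aug, pairQ_zero_left] at this
      simpa using this
    have hrowsk : ∀ k j, β j * gt k ≤ pairQ (b' j) (gx k) := by
      intro k j
      have := hgC k j.castSucc
      rw [hrows] at this
      rw [Fin.snoc_castSucc] at this
      rw [pairQ_aug] at this
      have h2 : -(β j) * gt k + pairQ (b' j) (gx k) ≥ 0 := this
      linarith
    -- gx of rays lie in the cone
    have hray : ∀ k, gt k = 0 → gx k ∈ coneOf a := by
      intro k hk
      rw [← hdualb]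
      intro j
      have hdb : (0:ℚ) ≤ pairQ (b' j) (gx k) := by
        have := hrowsk k j
        rw [hk, mul_zero] at this
        exact this
      rw [hb'] at hdb
      have : pairQ (N j • b j) (gx k) = N j * pairQ (b j) (gx k) := pairQ_smul_left _ _ _
      rw [this] at hdb
      nlinarith [hNpos j]
    -- the bounded box
    set P : Finset (Fin r) := Finset.univ.filter (fun k => 0 < gt k) with hP
    set Mbd : ι → ℚ := fun i => ∑ k ∈ P, |gx k i| / gt k with hMbd
    set S₀ : Set (ι → ℚ) := {x | ∀ i, |x i| ≤ Mbd i} with hS₀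
    refine ⟨S₀, ?_, ?_⟩
    · -- compactness
      set K : Set (ι → ℝ) := Set.univ.pi fun i => Set.Icc (-(Mbd i : ℝ)) ((Mbd i : ℝ)) with hK
      have hKc : IsCompact K := isCompact_univ_pi fun i => isCompact_Icc
      have hsub : castR '' S₀ ⊆ K := by
        rintro y ⟨x, hx, rfl⟩
        intro i _
        have h1 : |(x i : ℝ)| ≤ ((Mbd i : ℚ) : ℝ) := by
          rw [← Rat.cast_abs]
          exact_mod_cast hx i
        rw [Set.mem_Icc]
        exact ⟨(abs_le.mp h1).1, (abs_le.mp h1).2⟩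
      exact hKc.of_isClosed_subset isClosed_closure
        (closure_minimal hsub hKc.isClosed)
    · -- the decomposition
      intro s hs
      have hsrow : aug s 1 ∈ dualF rows := by
        intro z
        refine Fin.lastCases ?_ ?_ z
        · rw [hrows, Fin.snoc_last, pairQ_aug, pairQ_zero_left]
          simp
        · intro j
          rw [hrows, Fin.snoc_castSucc, pairQ_aug]
          have := hβS j s hs
          have hx : pairQ (b' j) (fun i => aug s 1 (some i)) = pairQ (b' j) s := rfl
          rw [hx]
          simp only [aug_none]
          linarith
      rw [hg] at hsrow
      obtain ⟨c, hc, hcs⟩ := hsrow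
      have hcoord : ∀ o, aug s 1 o = ∑ k, c k * g k o := by
        intro o
        rw [hcs]
        rw [Finset.sum_apply]
        exact Finset.sum_congr rfl fun k _ => rfl
      have hone : (1:ℚ) = ∑ k, c k * gt k := hcoord none
      have hsi : ∀ i, s i = ∑ k, c k * gx k i := fun i => hcoord (some i)
      set s₀ : ι → ℚ := ∑ k ∈ P, c k • gx k with hs₀def
      refine ⟨s₀, ?_, ?_⟩
      · -- s₀ ∈ S₀
        intro i
        have hcb : ∀ k ∈ P, c k * gt k ≤ 1 := by
          intro k _
          rw [hone]
          exact Finset.single_le_sum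
            (fun k' _ => mul_nonneg (hc k') (hgt0 k')) (Finset.mem_univ k)
        have : |s₀ i| ≤ ∑ k ∈ P, |c k * gx k i| := by
          rw [hs₀def]
          calc |(∑ k ∈ P, c k • gx k) i| = |∑ k ∈ P, c k * gx k i| := by
                rw [Finset.sum_apply]
                congr 1
            _ ≤ ∑ k ∈ P, |c k * gx k i| := Finset.abs_sum_le_sum_abs _ _
        refine le_trans this (Finset.sum_le_sum fun k hk => ?_)
        have hgtk : 0 < gt k := by
          have := hk
          rw [hP, Finset.mem_filter] at this
          exact this.2
        have hck : c k ≤ 1 / gt k := (le_div_iff₀ hgtk).mpr (hcb k hk)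
        rw [abs_mul, abs_of_nonneg (hc k), div_eq_mul_inv, mul_comm |gx k i| (gt k)⁻¹]
        exact mul_le_mul_of_nonneg_right (by rw [← one_div]; exact hck) (abs_nonneg _)
      · -- s - s₀ ∈ ratCone Φ
        rw [hrc]
        have hsplit : s - s₀ = ∑ k ∈ Finset.univ.filter (fun k => ¬ 0 < gt k), c k • gx k := by
          have : s = ∑ k, c k • gx k := by
            funext i
            rw [hsi i, Finset.sum_apply]
            exact Finset.sum_congr rfl fun k _ => rfl
          rw [this, hs₀def, hP]
          rw [← Finset.sum_filter_add_sum_filter_not Finset.univ (fun k => 0 < gt k)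
            (fun k => c k • gx k)]
          abel
        rw [hsplit]
        refine coneOf_sum _ c gx hc fun k hk => ?_
        rw [Finset.mem_filter] at hk
        exact hray k (le_antisymm (not_lt.mp hk.2) (hgt0 k))
  · -- (ii) → (i)
    rintro ⟨S₀, hcomp, hSsub⟩
    intro lamCheck hdom
    set lamQ : ι → ℚ := fun i => (lamCheck i : ℚ) with hlamQ
    set f : (ι → ℝ) → ℝ := fun y => ∑ i, (lamQ i : ℝ) * y i with hf
    have hfc : Continuous f :=
      continuous_finset_sum _ fun i _ => continuous_const.mul (continuous_apply i)
    have hKbdd : BddBelow (f '' closure (castR '' S₀)) := (hcomp.image hfc).bddBelow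
    obtain ⟨C, hC⟩ := hKbdd
    obtain ⟨q, hq⟩ := exists_rat_lt C
    refine ⟨q, ?_⟩
    rintro v ⟨s, hs, rfl⟩
    obtain ⟨s₀, hs₀, hcone⟩ := hSsub s hs
    have hcast : ((pairQ lamQ s₀ : ℚ) : ℝ) = f (castR s₀) := by
      rw [hf]
      unfold pairQ castR
      push_cast
      rfl
    have hmem : f (castR s₀) ∈ f '' closure (castR '' S₀) :=
      ⟨castR s₀, subset_closure ⟨s₀, hs₀, rfl⟩, rfl⟩
    have h1 : (q : ℝ) ≤ ((pairQ lamQ s₀ : ℚ) : ℝ) := by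
      rw [hcast]
      exact le_trans hq.le (hC hmem)
    have h2 : q ≤ pairQ lamQ s₀ := by exact_mod_cast h1
    obtain ⟨c, hc, hμ⟩ := hcone
    have h3 : 0 ≤ pairQ lamQ (s - s₀) := by
      rw [hμ, pairQ_sum_right]
      refine Finset.sum_nonneg fun x hx => ?_
      rw [pairQ_smul_right]
      exact mul_nonneg (hc x) (hdom x hx)
    have h4 : pairQ lamQ s = pairQ lamQ s₀ + pairQ lamQ (s - s₀) := by
      rw [← pairQ_add_right]
      congr 1
      abel
    show q ≤ pairQ lamQ s
    rw [h4]
    linarith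

end
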